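/- Let n ≥ 1 and let H_0,…,H_n be n+1 affine hyperplanes in ℝ^n with normal vectors u_0,…,u_n such that any n of the vectors u_0,…,u_n are linearly independent and the intersection H_0 ∩ … ∩ H_n is empty (equivalently, the hyperplanes bound an n-simplex). Then the complement ℝ^n \ (H_0 ∪ … ∪ H_n) has exactly 2^{n+1} − 1 connected components, and exactly one of these components is bounded (namely the open simplex). -/

import Mathlib

open scoped RealInnerProductSpace
open Set Bornology

set_option maxHeartbeats 1000000

noncomputable section

/-- The complement in `ℝⁿ` of the union of the affine hyperplanes `{x : ⟪u k, x⟫ = c k}`. -/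
def hyperplaneComplement {n : ℕ} (u : Fin (n + 1) → EuclideanSpace ℝ (Fin n))
    (c : Fin (n + 1) → ℝ) : Set (EuclideanSpace ℝ (Fin n)) :=
  (⋃ k : Fin (n + 1), {x : EuclideanSpace ℝ (Fin n) | ⟪u k, x⟫ = c k})ᶜ

/-- The set of connected components of the complement of the hyperplane arrangement. -/
def hyperplaneComplementComponents {n : ℕ} (u : Fin (n + 1) → EuclideanSpace ℝ (Fin n))
    (c : Fin (n + 1) → ℝ) : Set (Set (EuclideanSpace ℝ (Fin n))) :=
  {C | ∃ x ∈ hyperplaneComplement u c, C = connectedComponentIn (hyperplaneComplement u c) x}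

variable {n : ℕ}


private lemma aux_sum_ne {M : Type*} [AddCommGroup M] (v : Fin (n + 1) → M) (k : Fin (n + 1)) :
    ∑ m : {m : Fin (n + 1) // m ≠ k}, v (m : Fin (n + 1)) = (∑ m, v m) - v k := by
  rw [eq_sub_iff_add_eq, ← Finset.sum_erase_add Finset.univ v (Finset.mem_univ k)]
  congr 1
  exact (Finset.sum_subtype _ (by simp) v).symm  -- check direction

private def auxL (u : Fin (n + 1) → EuclideanSpace ℝ (Fin n)) (k : Fin (n + 1)) :
    EuclideanSpace ℝ (Fin n) →ₗ[ℝ] ({m : Fin (n + 1) // m ≠ k} → ℝ) :=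
  LinearMap.pi fun m => ((innerSL ℝ (u (m : Fin (n + 1)))) : EuclideanSpace ℝ (Fin n) →ₗ[ℝ] ℝ)

private lemma auxL_apply (u : Fin (n + 1) → EuclideanSpace ℝ (Fin n)) (k : Fin (n + 1))
    (x : EuclideanSpace ℝ (Fin n)) (m : {m : Fin (n + 1) // m ≠ k}) :
    auxL u k x m = ⟪u (m : Fin (n + 1)), x⟫ := rfl

private lemma aux_card (hn : 1 ≤ n) (k : Fin (n + 1)) :
    Fintype.card {m : Fin (n + 1) // m ≠ k} = n := by
  have : Fintype.card {m : Fin (n + 1) // ¬ (m = k)} = n + 1 - 1 := by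
    rw [Fintype.card_subtype_compl, Fintype.card_fin, Fintype.card_subtype_eq]
  simpa using this

private lemma aux_bij (hn : 1 ≤ n) {u : Fin (n + 1) → EuclideanSpace ℝ (Fin n)} (k : Fin (n + 1))
    (hind : LinearIndependent ℝ (fun m : {m : Fin (n + 1) // m ≠ k} => u (m : Fin (n + 1)))) :
    Function.Bijective (auxL u k) := by
  haveI : Nonempty {m : Fin (n + 1) // m ≠ k} := by
    rw [← Fintype.card_pos_iff, aux_card hn]; omega
  have hspan : Submodule.span ℝ (Set.range fun m : {m : Fin (n + 1) // m ≠ k} =>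
      u (m : Fin (n + 1))) = ⊤ :=
    hind.span_eq_top_of_card_eq_finrank (by rw [aux_card hn, finrank_euclideanSpace_fin])
  have hinj : Function.Injective (auxL u k) := by
    rw [← LinearMap.ker_eq_bot]
    rw [Submodule.eq_bot_iff]
    intro x hx
    have hx' : ∀ m : {m : Fin (n + 1) // m ≠ k}, ⟪u (m : Fin (n + 1)), x⟫ = 0 := by
      intro m
      have := congrFun (LinearMap.mem_ker.mp hx) m
      simpa [auxL_apply] using this
    have hxx : ⟪x, x⟫ = 0 := by
      have hxmem : x ∈ Submodule.span ℝ (Set.range fun m : {m : Fin (n + 1) // m ≠ k} =>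
          u (m : Fin (n + 1))) := by rw [hspan]; trivial
      refine Submodule.span_induction (p := fun y _ => ⟪y, x⟫ = 0) ?_ ?_ ?_ ?_ hxmem
      · rintro y ⟨m, rfl⟩; exact hx' m
      · simp
      · intro y z _ _ hy hz; rw [inner_add_left, hy, hz, add_zero]
      · intro a y _ hy; rw [real_inner_smul_left, hy, mul_zero]
    exact inner_self_eq_zero.mp hxx
  refine ⟨hinj, ?_⟩
  rw [← LinearMap.injective_iff_surjective_of_finrank_eq_finrank ?_]
  · exact hinj
  · rw [finrank_euclideanSpace_fin, Module.finrank_pi, aux_card hn]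

private lemma aux_surj (hn : 1 ≤ n) {u : Fin (n + 1) → EuclideanSpace ℝ (Fin n)} (k : Fin (n + 1))
    (hind : LinearIndependent ℝ (fun m : {m : Fin (n + 1) // m ≠ k} => u (m : Fin (n + 1))))
    (a : {m : Fin (n + 1) // m ≠ k} → ℝ) :
    ∃ x : EuclideanSpace ℝ (Fin n), ∀ m : {m : Fin (n + 1) // m ≠ k},
      ⟪u (m : Fin (n + 1)), x⟫ = a m := by
  obtain ⟨x, hx⟩ := (aux_bij hn k hind).2 a
  exact ⟨x, fun m => by rw [← auxL_apply u k x m, hx]⟩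

private lemma aux_bounded (hn : 1 ≤ n) {u : Fin (n + 1) → EuclideanSpace ℝ (Fin n)}
    (k : Fin (n + 1))
    (hind : LinearIndependent ℝ (fun m : {m : Fin (n + 1) // m ≠ k} => u (m : Fin (n + 1))))
    (S : Set (EuclideanSpace ℝ (Fin n))) (B : ℝ) (hB : 0 ≤ B)
    (hS : ∀ x ∈ S, ∀ m : {m : Fin (n + 1) // m ≠ k}, |⟪u (m : Fin (n + 1)), x⟫| ≤ B) :
    IsBounded S := by
  let e : EuclideanSpace ℝ (Fin n) ≃ₗ[ℝ] ({m : Fin (n + 1) // m ≠ k} → ℝ) :=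
    LinearEquiv.ofBijective (auxL u k) (aux_bij hn k hind)
  let e' := e.toContinuousLinearEquiv
  refine isBounded_iff_forall_norm_le.2 ⟨‖(e'.symm : ({m : Fin (n + 1) // m ≠ k} → ℝ) →L[ℝ]
    EuclideanSpace ℝ (Fin n))‖ * B, fun x hx => ?_⟩
  have hx1 : x = e'.symm (e' x) := (e'.symm_apply_apply x).symm
  calc ‖x‖ = ‖e'.symm (e' x)‖ := by rw [← hx1]
    _ ≤ ‖(e'.symm : ({m : Fin (n + 1) // m ≠ k} → ℝ) →L[ℝ] EuclideanSpace ℝ (Fin n))‖ * ‖e' x‖ :=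
        (e'.symm : ({m : Fin (n + 1) // m ≠ k} → ℝ) →L[ℝ] EuclideanSpace ℝ (Fin n)).le_opNorm _
    _ ≤ _ := by
        refine mul_le_mul_of_nonneg_left ?_ (norm_nonneg _)
        rw [pi_norm_le_iff_of_nonneg hB]
        intro m
        rw [Real.norm_eq_abs]; exact (hS x hx m : |e' x m| ≤ B)

/-- sign of a boolean pattern -/
private def sgn (ε : Fin (n + 1) → Bool) (k : Fin (n + 1)) : ℝ := if ε k then 1 else -1

private lemma sgn_sq (ε : Fin (n + 1) → Bool) (k : Fin (n + 1)) : sgn ε k * sgn ε k = 1 := by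
  unfold sgn; split <;> norm_num

private lemma sgn_abs (ε : Fin (n + 1) → Bool) (k : Fin (n + 1)) : |sgn ε k| = 1 := by
  unfold sgn; split <;> norm_num

private lemma sgn_ne (ε : Fin (n + 1) → Bool) (k : Fin (n + 1)) : sgn ε k ≠ 0 := by
  unfold sgn; split <;> norm_num

/-- the open region with sign pattern ε -/
private def Rgn (u : Fin (n + 1) → EuclideanSpace ℝ (Fin n)) (c : Fin (n + 1) → ℝ)
    (ε : Fin (n + 1) → Bool) : Set (EuclideanSpace ℝ (Fin n)) :=
  {x | ∀ k, 0 < sgn ε k * (⟪u k, x⟫ - c k)}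

private lemma Rgn_open (u : Fin (n + 1) → EuclideanSpace ℝ (Fin n)) (c : Fin (n + 1) → ℝ)
    (ε : Fin (n + 1) → Bool) : IsOpen (Rgn u c ε) := by
  have : Rgn u c ε = ⋂ k, {x | 0 < sgn ε k * (⟪u k, x⟫ - c k)} := by
    ext x; simp [Rgn]
  rw [this]
  refine isOpen_iInter_of_finite fun k => ?_
  exact isOpen_lt continuous_const
    (continuous_const.mul ((continuous_const.inner continuous_id).sub continuous_const))

private lemma Rgn_convex (u : Fin (n + 1) → EuclideanSpace ℝ (Fin n)) (c : Fin (n + 1) → ℝ)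
    (ε : Fin (n + 1) → Bool) : Convex ℝ (Rgn u c ε) := by
  have : Rgn u c ε = ⋂ k, {x | sgn ε k * c k < ⟪sgn ε k • u k, x⟫} := by
    ext x
    simp only [Rgn, mem_setOf_eq, mem_iInter]
    refine forall_congr' fun k => ?_
    rw [real_inner_smul_left, mul_sub, sub_pos]
  rw [this]
  refine convex_iInter fun k => ?_
  exact convex_halfSpace_gt
    ⟨fun a b => inner_add_right _ _ _, fun r a => real_inner_smul_right _ _ _⟩ _

private lemma Rgn_subset (u : Fin (n + 1) → EuclideanSpace ℝ (Fin n)) (c : Fin (n + 1) → ℝ)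
    (ε : Fin (n + 1) → Bool) : Rgn u c ε ⊆ hyperplaneComplement u c := by
  intro x hx
  simp only [hyperplaneComplement, mem_compl_iff, mem_iUnion, mem_setOf_eq, not_exists]
  intro k hk
  have := hx k
  rw [hk, sub_self, mul_zero] at this
  exact lt_irrefl 0 this

private def pat (u : Fin (n + 1) → EuclideanSpace ℝ (Fin n)) (c : Fin (n + 1) → ℝ)
    (x : EuclideanSpace ℝ (Fin n)) (k : Fin (n + 1)) : Bool := decide (0 < ⟪u k, x⟫ - c k)

private lemma mem_Rgn_pat {u : Fin (n + 1) → EuclideanSpace ℝ (Fin n)} {c : Fin (n + 1) → ℝ}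
    {x : EuclideanSpace ℝ (Fin n)} (hx : x ∈ hyperplaneComplement u c) :
    x ∈ Rgn u c (pat u c x) := by
  intro k
  have hne : ⟪u k, x⟫ - c k ≠ 0 := by
    simp only [hyperplaneComplement, mem_compl_iff, mem_iUnion, mem_setOf_eq, not_exists] at hx
    exact sub_ne_zero_of_ne (hx k)
  rcases lt_or_gt_of_ne hne with h | h
  · have hp : pat u c x k = false := decide_eq_false (not_lt.mpr h.le)
    have hs : sgn (pat u c x) k = -1 := by unfold sgn; rw [hp]; simp
    rw [hs]; linarith
  · have hp : pat u c x k = true := decide_eq_true h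
    have hs : sgn (pat u c x) k = 1 := by unfold sgn; rw [hp]; simp
    rw [hs]; linarith

private lemma pat_eq_of_mem {u : Fin (n + 1) → EuclideanSpace ℝ (Fin n)} {c : Fin (n + 1) → ℝ}
    {x : EuclideanSpace ℝ (Fin n)} {ε : Fin (n + 1) → Bool} (hx : x ∈ Rgn u c ε) :
    ε = pat u c x := by
  funext k
  have h := hx k
  rcases Bool.eq_false_or_eq_true (ε k) with hb | hb
  · have hs : sgn ε k = 1 := by unfold sgn; rw [hb]; simp
    rw [hs] at h
    rw [hb]
    exact (decide_eq_true (by linarith)).symm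
  · have hs : sgn ε k = -1 := by unfold sgn; rw [hb]; simp
    rw [hs] at h
    rw [hb]
    exact (decide_eq_false (not_lt.mpr (by linarith))).symm

private lemma ccIn_eq {u : Fin (n + 1) → EuclideanSpace ℝ (Fin n)} {c : Fin (n + 1) → ℝ}
    {x : EuclideanSpace ℝ (Fin n)} (hx : x ∈ hyperplaneComplement u c) :
    connectedComponentIn (hyperplaneComplement u c) x = Rgn u c (pat u c x) := by
  apply Subset.antisymm
  · set V := ⋃ ε ∈ {ε : Fin (n + 1) → Bool | ε ≠ pat u c x}, Rgn u c ε with hV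
    have hVopen : IsOpen V := isOpen_biUnion fun ε _ => Rgn_open u c ε
    have hdisj : Disjoint (Rgn u c (pat u c x)) V := by
      rw [Set.disjoint_left]
      rintro y hy hyV
      simp only [hV, mem_iUnion, mem_setOf_eq] at hyV
      obtain ⟨ε, hεne, hyε⟩ := hyV
      exact hεne ((pat_eq_of_mem hyε).trans (pat_eq_of_mem hy).symm)
    have hsub : connectedComponentIn (hyperplaneComplement u c) x ⊆
        Rgn u c (pat u c x) ∪ V := by
      intro y hy
      have hyT : y ∈ hyperplaneComplement u c := connectedComponentIn_subset _ _ hy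
      by_cases hp : pat u c y = pat u c x
      · left; rw [← hp]; exact mem_Rgn_pat hyT
      · right; exact mem_iUnion₂.mpr ⟨pat u c y, hp, mem_Rgn_pat hyT⟩
    exact isPreconnected_connectedComponentIn.subset_left_of_subset_union
      (Rgn_open u c _) hVopen hdisj hsub
      ⟨x, mem_connectedComponentIn hx, mem_Rgn_pat hx⟩
  · exact ((Rgn_convex u c _).isPreconnected).subset_connectedComponentIn (mem_Rgn_pat hx)
      (Rgn_subset u c _)

/-- Let `H 0, …, H n` be `n + 1` affine hyperplanes in `ℝⁿ`,
`H k = {x : ⟪u k, x⟫ = c k}`, such that any `n` of the normal vectors `u k` are linearly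
independent and `H 0 ∩ ⋯ ∩ H n = ∅` (so the hyperplanes bound an `n`-simplex).  Then the
complement of `H 0 ∪ ⋯ ∪ H n` has exactly `2^(n+1) - 1` connected components, exactly one of
which is bounded (namely the open simplex). -/
theorem simplex_hyperplane_arrangement {n : ℕ} (hn : 1 ≤ n)
    (u : Fin (n + 1) → EuclideanSpace ℝ (Fin n)) (c : Fin (n + 1) → ℝ)
    (hu : ∀ k, u k ≠ 0)
    (hind : ∀ k : Fin (n + 1),
      LinearIndependent ℝ (fun m : {m : Fin (n + 1) // m ≠ k} => u (m : Fin (n + 1))))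
    (hempty : (⋂ k : Fin (n + 1), {x : EuclideanSpace ℝ (Fin n) | ⟪u k, x⟫ = c k}) = ∅) :
    (hyperplaneComplementComponents u c).ncard = 2 ^ (n + 1) - 1 ∧
      ∃! C : Set (EuclideanSpace ℝ (Fin n)),
        C ∈ hyperplaneComplementComponents u c ∧ Bornology.IsBounded C := by
  classical
  -- Step 1: a linear dependence with all coefficients nonzero and positive pairing with c
  obtain ⟨g, hgsum, hgne, hd⟩ : ∃ g : Fin (n + 1) → ℝ,
      ∑ k, g k • u k = 0 ∧ (∀ k, g k ≠ 0) ∧ 0 < ∑ k, g k * c k := by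
    have hdep : ¬ LinearIndependent ℝ u := by
      intro h
      have hcard := h.fintype_card_le_finrank
      rw [finrank_euclideanSpace_fin, Fintype.card_fin] at hcard
      omega
    obtain ⟨g0, hg0sum, i0, hg0⟩ := Fintype.not_linearIndependent_iff.mp hdep
    have hall : ∀ k, g0 k ≠ 0 := by
      intro k hk
      have hsub : ∑ m : {m : Fin (n + 1) // m ≠ k}, g0 (m : Fin (n + 1)) • u (m : Fin (n + 1))
          = 0 := by
        rw [aux_sum_ne (fun m => g0 m • u m) k, hg0sum, hk, zero_smul, sub_zero]
      have hz := Fintype.linearIndependent_iff.mp (hind k)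
        (fun m : {m : Fin (n + 1) // m ≠ k} => g0 (m : Fin (n + 1))) hsub
      rcases eq_or_ne i0 k with rfl | hik
      · exact hg0 hk
      · exact hg0 (hz ⟨i0, hik⟩)
    have hkey0 : ∀ x : EuclideanSpace ℝ (Fin n), ∑ k, g0 k * ⟪u k, x⟫ = 0 := by
      intro x
      have h0 : ⟪∑ k, g0 k • u k, x⟫ = (0 : ℝ) := by rw [hg0sum, inner_zero_left]
      rw [sum_inner] at h0
      calc ∑ k, g0 k * ⟪u k, x⟫ = ∑ k, ⟪g0 k • u k, x⟫ :=
            Finset.sum_congr rfl fun k _ => (real_inner_smul_left _ _ _).symm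
        _ = 0 := h0
    have hdne : ∑ k, g0 k * c k ≠ 0 := by
      intro h0
      obtain ⟨x, hx⟩ := aux_surj hn (0 : Fin (n + 1)) (hind 0)
        (fun m : {m : Fin (n + 1) // m ≠ 0} => c (m : Fin (n + 1)))
      have hx0 : ⟪u 0, x⟫ = c 0 := by
        have e1 := aux_sum_ne (fun m => g0 m * ⟪u m, x⟫) (0 : Fin (n + 1))
        have e3 := aux_sum_ne (fun m => g0 m * c m) (0 : Fin (n + 1))
        have e2 : ∑ m : {m : Fin (n + 1) // m ≠ 0}, g0 (m : Fin (n + 1)) * ⟪u (m : Fin (n + 1)), x⟫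
            = ∑ m : {m : Fin (n + 1) // m ≠ 0}, g0 (m : Fin (n + 1)) * c (m : Fin (n + 1)) :=
          Finset.sum_congr rfl fun m _ => by rw [hx m]
        rw [hkey0 x] at e1
        rw [h0] at e3
        have : g0 0 * ⟪u 0, x⟫ = g0 0 * c 0 := by
          rw [e2] at e1
          rw [e3] at e1
          linarith
        exact mul_left_cancel₀ (hall 0) this
      have hmem : x ∈ ⋂ k : Fin (n + 1), {x : EuclideanSpace ℝ (Fin n) | ⟪u k, x⟫ = c k} := by
        rw [mem_iInter]
        intro k
        rcases eq_or_ne k 0 with rfl | hk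
        · exact hx0
        · exact hx ⟨k, hk⟩
      rw [hempty] at hmem
      exact hmem
    rcases lt_or_gt_of_ne hdne with hneg | hpos
    · refine ⟨-g0, ?_, fun k => neg_ne_zero.mpr (hall k), ?_⟩
      · simp only [Pi.neg_apply, neg_smul, Finset.sum_neg_distrib, hg0sum, neg_zero]
      · have : ∑ k, (-g0) k * c k = -(∑ k, g0 k * c k) := by
          simp [neg_mul, Finset.sum_neg_distrib]
        rw [this]
        linarith
    · exact ⟨g0, hg0sum, hall, hpos⟩
  set d := ∑ k, g k * c k with hd_def
  have hkey0 : ∀ x : EuclideanSpace ℝ (Fin n), ∑ k, g k * ⟪u k, x⟫ = 0 := by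
    intro x
    have h0 : ⟪∑ k, g k • u k, x⟫ = (0 : ℝ) := by rw [hgsum, inner_zero_left]
    rw [sum_inner] at h0
    calc ∑ k, g k * ⟪u k, x⟫ = ∑ k, ⟪g k • u k, x⟫ :=
          Finset.sum_congr rfl fun k _ => (real_inner_smul_left _ _ _).symm
      _ = 0 := h0
  have hkey : ∀ x : EuclideanSpace ℝ (Fin n), ∑ k, g k * (⟪u k, x⟫ - c k) = -d := by
    intro x
    have : ∑ k, g k * (⟪u k, x⟫ - c k) = ∑ k, g k * ⟪u k, x⟫ - ∑ k, g k * c k := by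
      rw [← Finset.sum_sub_distrib]
      exact Finset.sum_congr rfl fun k _ => by ring
    rw [this, hkey0 x]
    ring
  set εbad : Fin (n + 1) → Bool := fun k => decide (0 < g k) with hεbad
  set εgood : Fin (n + 1) → Bool := fun k => decide (g k < 0) with hεgood
  have hsgn_pos : ∀ (ε : Fin (n + 1) → Bool) (k), ε k = εbad k → 0 < sgn ε k * g k := by
    intro ε k h
    rcases lt_or_gt_of_ne (hgne k) with hneg | hpos
    · have hb : εbad k = false := decide_eq_false (by linarith)
      have hs : sgn ε k = -1 := by unfold sgn; rw [h, hb]; simp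
      rw [hs]; linarith
    · have hb : εbad k = true := decide_eq_true hpos
      have hs : sgn ε k = 1 := by unfold sgn; rw [h, hb]; simp
      rw [hs]; linarith
  have hsgn_neg : ∀ (ε : Fin (n + 1) → Bool) (k), ε k ≠ εbad k → sgn ε k * g k < 0 := by
    intro ε k h
    rcases lt_or_gt_of_ne (hgne k) with hneg | hpos
    · have hb : εbad k = false := decide_eq_false (by linarith)
      rw [hb] at h
      have he : ε k = true := by revert h; cases ε k <;> simp
      have hs : sgn ε k = 1 := by unfold sgn; rw [he]; simp
      rw [hs]; linarith
    · have hb : εbad k = true := decide_eq_true hpos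
      rw [hb] at h
      have he : ε k = false := by revert h; cases ε k <;> simp
      have hs : sgn ε k = -1 := by unfold sgn; rw [he]; simp
      rw [hs]; linarith
  have hgoodbadk : ∀ k, εgood k ≠ εbad k := by
    intro k
    rcases lt_or_gt_of_ne (hgne k) with hneg | hpos
    · have h1 : εgood k = true := decide_eq_true hneg
      have h2 : εbad k = false := decide_eq_false (by linarith)
      rw [h1, h2]; simp
    · have h1 : εgood k = false := decide_eq_false (by linarith)
      have h2 : εbad k = true := decide_eq_true hpos
      rw [h1, h2]; simp
  have hgoodbad : εgood ≠ εbad := Function.ne_iff.mpr ⟨0, hgoodbadk 0⟩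
  -- the region with the "impossible" pattern is empty
  have hbad : Rgn u c εbad = ∅ := by
    ext x
    simp only [mem_empty_iff_false, iff_false]
    intro hx
    have hterm : ∀ k, 0 < g k * (⟪u k, x⟫ - c k) := by
      intro k
      have h1 := hx k
      have h2 := hsgn_pos εbad k rfl
      nlinarith [sgn_sq εbad k]
    have hsum := Finset.sum_pos (fun k _ => hterm k) Finset.univ_nonempty
    rw [hkey x] at hsum
    linarith
  -- every other region is nonempty
  have hne : ∀ ε : Fin (n + 1) → Bool, ε ≠ εbad → (Rgn u c ε).Nonempty := by
    intro ε hε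
    obtain ⟨k, hk⟩ := Function.ne_iff.mp hε
    have hsk := hsgn_neg ε k hk
    set G := ∑ m, |g m| with hG
    have hGnn : 0 ≤ G := Finset.sum_nonneg fun m _ => abs_nonneg _
    set δ := d / (2 * (G + 1)) with hδdef
    have hδ : 0 < δ := div_pos hd (by linarith)
    have hδG : δ * G < d := by
      have he : δ * (2 * (G + 1)) = d := by
        rw [hδdef]; field_simp
      nlinarith
    obtain ⟨x, hx⟩ := aux_surj hn k (hind k)
      (fun m : {m : Fin (n + 1) // m ≠ k} => c (m : Fin (n + 1)) + sgn ε (m : Fin (n + 1)) * δ)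
    refine ⟨x, fun m => ?_⟩
    rcases eq_or_ne m k with rfl | hm
    · have hsum := hkey x
      have e1 := aux_sum_ne (fun j => g j * (⟪u j, x⟫ - c j)) m
      have e2 : ∑ j : {j : Fin (n + 1) // j ≠ m}, g (j : Fin (n + 1)) *
            (⟪u (j : Fin (n + 1)), x⟫ - c (j : Fin (n + 1)))
          = ∑ j : {j : Fin (n + 1) // j ≠ m}, g (j : Fin (n + 1)) *
            (sgn ε (j : Fin (n + 1)) * δ) :=
        Finset.sum_congr rfl fun j _ => by rw [hx j]; ring
      have hbound : |∑ j : {j : Fin (n + 1) // j ≠ m}, g (j : Fin (n + 1)) *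
          (sgn ε (j : Fin (n + 1)) * δ)| ≤ δ * G := by
        calc |∑ j : {j : Fin (n + 1) // j ≠ m}, g (j : Fin (n + 1)) *
              (sgn ε (j : Fin (n + 1)) * δ)|
            ≤ ∑ j : {j : Fin (n + 1) // j ≠ m}, |g (j : Fin (n + 1)) *
              (sgn ε (j : Fin (n + 1)) * δ)| := Finset.abs_sum_le_sum_abs _ _
          _ = ∑ j : {j : Fin (n + 1) // j ≠ m}, |g (j : Fin (n + 1))| * δ := by
              refine Finset.sum_congr rfl fun j _ => ?_
              rw [abs_mul, abs_mul, sgn_abs, abs_of_pos hδ, one_mul]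
          _ = (∑ j : {j : Fin (n + 1) // j ≠ m}, |g (j : Fin (n + 1))|) * δ :=
              (Finset.sum_mul _ _ _).symm
          _ ≤ G * δ := by
              refine mul_le_mul_of_nonneg_right ?_ hδ.le
              rw [aux_sum_ne (fun j => |g j|) m]
              have := abs_nonneg (g m)
              linarith
          _ = δ * G := mul_comm _ _
      have hfk : g m * (⟪u m, x⟫ - c m) < 0 := by
        have heq : g m * (⟪u m, x⟫ - c m) =
            -d - ∑ j : {j : Fin (n + 1) // j ≠ m}, g (j : Fin (n + 1)) *
              (sgn ε (j : Fin (n + 1)) * δ) := by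
          rw [e2] at e1
          rw [hsum] at e1
          linarith
        have habs := abs_le.mp hbound
        rw [heq]
        linarith
      have h1 : 0 < (sgn ε m * g m) * (g m * (⟪u m, x⟫ - c m)) :=
        mul_pos_of_neg_of_neg hsk hfk
      nlinarith [mul_self_pos.mpr (hgne m)]
    · have hxm := hx ⟨m, hm⟩
      rw [hxm]
      have : c m + sgn ε m * δ - c m = sgn ε m * δ := by ring
      rw [this, ← mul_assoc, sgn_sq, one_mul]
      exact hδ
  -- description of the set of connected components
  have hcomp : hyperplaneComplementComponents u c
      = Rgn u c '' {ε : Fin (n + 1) → Bool | ε ≠ εbad} := by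
    ext C
    constructor
    · rintro ⟨x, hxT, rfl⟩
      refine ⟨pat u c x, ?_, (ccIn_eq hxT).symm⟩
      intro hp
      have hx' := mem_Rgn_pat hxT
      rw [hp, hbad] at hx'
      exact hx'
    · rintro ⟨ε, hε, rfl⟩
      obtain ⟨x, hx⟩ := hne ε hε
      have hxT := Rgn_subset u c ε hx
      exact ⟨x, hxT, by rw [ccIn_eq hxT, ← pat_eq_of_mem hx]⟩
  -- the simplex region is bounded
  have hgoodneg : ∀ x ∈ Rgn u c εgood, ∀ k, g k * (⟪u k, x⟫ - c k) < 0 := by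
    intro x hx k
    have h1 := hx k
    have h2 := hsgn_neg εgood k (hgoodbadk k)
    nlinarith [sgn_sq εgood k]
  have hgoodbdd : IsBounded (Rgn u c εgood) := by
    set B := ∑ m, (d / |g m| + |c m|) with hB
    have hBnn : 0 ≤ B := Finset.sum_nonneg fun m _ => by
      have := abs_pos.mpr (hgne m)
      positivity
    refine aux_bounded hn 0 (hind 0) _ B hBnn ?_
    intro x hx m
    set k := (m : Fin (n + 1))
    have hfk : -d ≤ g k * (⟪u k, x⟫ - c k) := by
      have e1 := aux_sum_ne (fun j => g j * (⟪u j, x⟫ - c j)) k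
      rw [hkey x] at e1
      have hsle : ∑ j : {j : Fin (n + 1) // j ≠ k}, g (j : Fin (n + 1)) *
          (⟪u (j : Fin (n + 1)), x⟫ - c (j : Fin (n + 1))) ≤ 0 :=
        Finset.sum_nonpos fun j _ => (hgoodneg x hx _).le
      linarith
    have habs : |g k * (⟪u k, x⟫ - c k)| ≤ d := by
      rw [abs_le]
      exact ⟨hfk, by linarith [hgoodneg x hx k]⟩
    have hgk : 0 < |g k| := abs_pos.mpr (hgne k)
    have hfabs : |⟪u k, x⟫ - c k| ≤ d / |g k| := by
      rw [le_div_iff₀ hgk]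
      calc |⟪u k, x⟫ - c k| * |g k| = |g k * (⟪u k, x⟫ - c k)| := by
            rw [abs_mul]; ring
        _ ≤ d := habs
    calc |⟪u k, x⟫| = |(⟪u k, x⟫ - c k) + c k| := by ring_nf
      _ ≤ |⟪u k, x⟫ - c k| + |c k| := abs_add_le _ _
      _ ≤ d / |g k| + |c k| := by linarith
      _ ≤ B := Finset.single_le_sum (f := fun m => d / |g m| + |c m|)
          (fun m _ => by have := abs_pos.mpr (hgne m); positivity) (Finset.mem_univ k)
  -- all other regions are unbounded
  have hunbdd : ∀ ε : Fin (n + 1) → Bool, ε ≠ εbad → ε ≠ εgood → ¬ IsBounded (Rgn u c ε) := by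
    intro ε hεb hεg
    obtain ⟨k, hk⟩ := Function.ne_iff.mp hεg
    have hkeq : ε k = εbad k := by
      cases hb : εbad k <;> cases he : ε k
      · rfl
      · exfalso
        have hg2 : εgood k = true := by
          cases hgt : εgood k
          · exact absurd (hgt.trans hb.symm) (hgoodbadk k)
          · rfl
        exact hk (he.trans hg2.symm)
      · exfalso
        have hg2 : εgood k = false := by
          cases hgt : εgood k
          · rfl
          · exact absurd (hgt.trans hb.symm) (hgoodbadk k)
        exact hk (he.trans hg2.symm)
      · rfl
    obtain ⟨j, hj⟩ := Function.ne_iff.mp hεb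
    have hsj := hsgn_neg ε j hj
    have hsk := hsgn_pos ε k hkeq
    have hjk : j ≠ k := by
      rintro rfl
      nlinarith
    obtain ⟨v, hv⟩ := aux_surj hn k (hind k)
      (fun m : {m : Fin (n + 1) // m ≠ k} =>
        if (m : Fin (n + 1)) = j then sgn ε j else 0)
    have hvk : 0 < g k * ⟪u k, v⟫ := by
      have e1 := aux_sum_ne (fun m => g m * ⟪u m, v⟫) k
      rw [hkey0 v] at e1
      have e2 : ∑ m : {m : Fin (n + 1) // m ≠ k}, g (m : Fin (n + 1)) * ⟪u (m : Fin (n + 1)), v⟫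
          = ∑ m : {m : Fin (n + 1) // m ≠ k},
            (if (m : Fin (n + 1)) = j then g (m : Fin (n + 1)) * sgn ε j else 0) := by
        refine Finset.sum_congr rfl fun m _ => ?_
        rw [hv m]
        split <;> simp
      have e3 : ∑ m : {m : Fin (n + 1) // m ≠ k},
          (if (m : Fin (n + 1)) = j then g (m : Fin (n + 1)) * sgn ε j else 0)
          = g j * sgn ε j := by
        rw [aux_sum_ne (fun m => if m = j then g m * sgn ε j else 0) k]
        rw [Finset.sum_ite_eq' Finset.univ j (fun m => g m * sgn ε j)]
        simp [hjk.symm]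
      rw [e2, e3] at e1
      nlinarith
    have hvkε : 0 < sgn ε k * ⟪u k, v⟫ := by
      nlinarith [mul_self_pos.mpr (hgne k)]
    have hvm : ∀ m : Fin (n + 1), 0 ≤ sgn ε m * ⟪u m, v⟫ := by
      intro m
      rcases eq_or_ne m k with rfl | hm
      · exact hvkε.le
      · have h := hv ⟨m, hm⟩
        rcases eq_or_ne m j with rfl | hmj
        · rw [h, if_pos rfl, sgn_sq]
          norm_num
        · rw [h, if_neg hmj, mul_zero]
    have hray : ∀ x0 ∈ Rgn u c ε, ∀ t : ℝ, 0 ≤ t → x0 + t • v ∈ Rgn u c ε := by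
      intro x0 hx0 t ht m
      have h1 := hx0 m
      have h2 := hvm m
      have hir : ⟪u m, x0 + t • v⟫ = ⟪u m, x0⟫ + t * ⟪u m, v⟫ := by
        rw [inner_add_right, real_inner_smul_right]
      rw [hir]
      have hexp : sgn ε m * (⟪u m, x0⟫ + t * ⟪u m, v⟫ - c m)
          = sgn ε m * (⟪u m, x0⟫ - c m) + t * (sgn ε m * ⟪u m, v⟫) := by ring
      rw [hexp]
      nlinarith
    have hvne : v ≠ 0 := by
      intro h0
      have h := hv ⟨j, hjk⟩
      rw [h0, inner_zero_right, if_pos rfl] at h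
      exact sgn_ne ε j h.symm
    intro hbdd
    obtain ⟨C, hC⟩ := isBounded_iff_forall_norm_le.mp hbdd
    obtain ⟨x0, hx0⟩ := hne ε hεb
    have hvpos : 0 < ‖v‖ := norm_pos_iff.mpr hvne
    set t := (C + ‖x0‖ + 1) / ‖v‖ with htdef
    have hx0C := hC x0 hx0
    have ht : 0 ≤ t := div_nonneg (by linarith [norm_nonneg x0]) hvpos.le
    have hmem := hray x0 hx0 t ht
    have hle := hC _ hmem
    have htv : ‖t • v‖ = C + ‖x0‖ + 1 := by
      rw [norm_smul, Real.norm_eq_abs, abs_of_nonneg ht, htdef, div_mul_cancel₀]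
      exact hvpos.ne'
    have hge : ‖t • v‖ ≤ ‖x0 + t • v‖ + ‖x0‖ := by
      have h := norm_sub_le (x0 + t • v) x0
      simpa using h
    linarith
  constructor
  · rw [hcomp]
    rw [Set.ncard_image_of_injOn]
    · have hset : {ε : Fin (n + 1) → Bool | ε ≠ εbad} = Set.univ \ {εbad} := by
        ext ε; simp
      rw [hset, Set.ncard_diff (subset_univ _), Set.ncard_univ, Set.ncard_singleton,
        Nat.card_eq_fintype_card, Fintype.card_fun, Fintype.card_bool, Fintype.card_fin]
    · intro ε1 h1 ε2 h2 heq
      obtain ⟨x, hx1⟩ := hne ε1 h1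
      have hx2 : x ∈ Rgn u c ε2 := by rw [← heq]; exact hx1
      exact (pat_eq_of_mem hx1).trans (pat_eq_of_mem hx2).symm
  · refine ⟨Rgn u c εgood, ⟨?_, hgoodbdd⟩, ?_⟩
    · rw [hcomp]; exact ⟨εgood, hgoodbad, rfl⟩
    · rintro C ⟨hC, hCb⟩
      rw [hcomp] at hC
      obtain ⟨ε, hε, rfl⟩ := hC
      by_contra hne'
      refine hunbdd ε hε ?_ hCb
      rintro rfl
      exact hne' rfl
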